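/- Let G be an abelian group and S a finite generating subset of G with 0 ∈ S such that the Cayley graph Cay(G,S) is k-separable. Then Cay(G,S) is k-faithful; in particular, if H is a 1-atom containing 0, then H is a subgroup of G. -/

import Mathlib

open Set Pointwise

/-- The family S_k for the Cayley graph Γ(X) = X + S in an abelian group:
finite X with |X| ≥ k and at least k elements outside X + S. -/
def SkAdd {G : Type*} [AddCommGroup G] (S : Set G) (k : ℕ) : Set (Set G) :=
  {X | X.Finite ∧ k ≤ X.ncard ∧ ∃ Y : Set G, Y.Finite ∧ Y.ncard = k ∧ Y ⊆ (X + S)ᶜ}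

/-- S is k-separable. -/
def SepAdd {G : Type*} [AddCommGroup G] (S : Set G) (k : ℕ) : Prop := (SkAdd S k).Nonempty

/-- The k-isoperimetric connectivity κ_k(S). -/
noncomputable def kappaAdd {G : Type*} [AddCommGroup G] (S : Set G) (k : ℕ) : ℕ :=
  sInf ((fun X => (X + S).ncard - X.ncard) '' SkAdd S k)

/-- X is a k-fragment of S. -/
def IsFragAdd {G : Type*} [AddCommGroup G] (S : Set G) (k : ℕ) (X : Set G) : Prop :=
  X ∈ SkAdd S k ∧ (X + S).ncard - X.ncard = kappaAdd S k

/-- X is a k-atom of S. -/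
def IsAtomAdd {G : Type*} [AddCommGroup G] (S : Set G) (k : ℕ) (X : Set G) : Prop :=
  IsFragAdd S k X ∧ ∀ Y, IsFragAdd S k Y → X.ncard ≤ Y.ncard

/-- S is k-faithful: any k-atom A satisfies |A| ≤ |G \ (A + S)|. -/
def FaithfulAdd {G : Type*} [AddCommGroup G] (S : Set G) (k : ℕ) : Prop :=
  ∀ A : Set G, IsAtomAdd S k A → ((A + S)ᶜ).Infinite ∨ A.ncard ≤ ((A + S)ᶜ).ncard

/-- A is an arithmetic progression {a, a+d, ..., a+md}. -/
def IsAP {G : Type*} [AddCommGroup G] (A : Set G) : Prop :=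
  ∃ a d : G, ∃ m : ℕ, A = (fun i : ℕ => a + i • d) '' {i | i ≤ m}

/-- S is a Vosper subset: non-2-separable or κ₂(S) ≥ |S|. -/
def IsVosper {G : Type*} [AddCommGroup G] (S : Set G) : Prop :=
  ¬ SepAdd S 2 ∨ S.ncard ≤ kappaAdd S 2

/-- H is a hyper-atom of S: a subgroup which is a 1-fragment, of maximal cardinality
among subgroups which are 1-fragments. -/
def IsHyperAtom {G : Type*} [AddCommGroup G] (S : Set G) (H : AddSubgroup G) : Prop :=
  IsFragAdd S 1 ↑H ∧
    ∀ K : AddSubgroup G, IsFragAdd S 1 ↑K → (K : Set G).ncard ≤ (H : Set G).ncard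

/-- C is an H-component of S: a non-empty set of the form S ∩ (x + H). -/
def IsComponent {G : Type*} [AddCommGroup G] (H : AddSubgroup G) (S C : Set G) : Prop :=
  C.Nonempty ∧ ∃ x : G, C = S ∩ ({x} + (H : Set G))

/-- C is a smaller H-component of S: an H-component of minimal cardinality. -/
def IsSmallerComponent {G : Type*} [AddCommGroup G] (H : AddSubgroup G) (S C : Set G) : Prop :=
  IsComponent H S C ∧ ∀ C', IsComponent H S C' → C.ncard ≤ C'.ncard

/-- The k-fold sumset kS = S + ⋯ + S (with 0S = {0}). -/
def iterSum {G : Type*} [AddCommGroup G] (S : Set G) : ℕ → Set G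
  | 0 => {0}
  | n + 1 => iterSum S n + S

/-- A is aperiodic: its period {x : x + A = A} is trivial. -/
def IsAperiodic {G : Type*} [AddCommGroup G] (A : Set G) : Prop :=
  ∀ x : G, {x} + A = A → x = 0

section CayleyAux

variable {G : Type*} [AddCommGroup G] {S : Set G}

lemma cay_translate_card (g : G) (Z : Set G) : ({g} + Z).ncard = Z.ncard := by
  rw [Set.singleton_add]
  exact Set.ncard_image_of_injective _ (add_right_injective g)

lemma cay_translate_Sk {k : ℕ} {X : Set G} (g : G) (hX : X ∈ SkAdd S k) :
    {g} + X ∈ SkAdd S k := by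
  obtain ⟨hXf, hXk, Y, hYf, hYk, hYsub⟩ := hX
  refine ⟨?_, by rwa [cay_translate_card], {g} + Y, ?_,
    by rwa [cay_translate_card], ?_⟩
  · rw [Set.singleton_add]; exact hXf.image _
  · rw [Set.singleton_add]; exact hYf.image _
  · have hassoc : ({g} + X) + S = {g} + (X + S) := add_assoc _ _ _
    have hbij : Function.Bijective (fun x : G => g + x) := (Equiv.addLeft g).bijective
    rw [hassoc, Set.singleton_add, Set.singleton_add, ← Set.image_compl_eq hbij]
    exact Set.image_mono hYsub

lemma cay_translate_atom {k : ℕ} {X : Set G} (g : G) (hX : IsAtomAdd S k X) :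
    IsAtomAdd S k ({g} + X) := by
  obtain ⟨⟨hmem, hfrag⟩, hmin⟩ := hX
  have hassoc : ({g} + X) + S = {g} + (X + S) := add_assoc _ _ _
  refine ⟨⟨cay_translate_Sk g hmem, ?_⟩, fun Y hY => ?_⟩
  · rw [hassoc, cay_translate_card, cay_translate_card]; exact hfrag
  · rw [cay_translate_card]; exact hmin Y hY

lemma cay_kappa_le {k : ℕ} {X : Set G} (hX : X ∈ SkAdd S k) :
    kappaAdd S k ≤ (X + S).ncard - X.ncard :=
  Nat.sInf_le ⟨X, hX, rfl⟩

lemma cay_subset_addS (h0 : (0 : G) ∈ S) (X : Set G) : X ⊆ X + S := fun x hx => by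
  simpa using Set.add_mem_add hx h0

lemma cay_faithful (hfin : S.Finite) (h0 : (0 : G) ∈ S) (k : ℕ) : FaithfulAdd S k := by
  intro A hA
  obtain ⟨⟨⟨hAfin, hAk, Y0, hY0f, hY0k, hY0sub⟩, hAfrag⟩, hAmin⟩ := hA
  by_cases hinf : ((A + S)ᶜ).Infinite
  · exact Or.inl hinf
  right
  rw [Set.not_infinite] at hinf
  have hASfin : (A + S).Finite := hAfin.add hfin
  have huniv : (Set.univ : Set G).Finite := by
    have h := hASfin.union hinf
    rwa [Set.union_compl_self] at h
  haveI : Finite G := Set.finite_univ_iff.mp huniv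
  have hnegcard : ∀ W : Set G, (-W).ncard = W.ncard := fun W => by
    rw [← Set.image_neg_eq_neg]
    exact Set.ncard_image_of_injective _ neg_injective
  set Y := (A + S)ᶜ with hYdef
  have h1 : -A ⊆ ((-Y) + S)ᶜ := by
    intro x hx hmem
    obtain ⟨z, hz, s, hs, hzs⟩ := hmem
    have hzY : -z ∉ A + S := hz
    have heq : -z = -x + s := by simp only at hzs; rw [← hzs]; abel
    exact hzY (heq ▸ Set.add_mem_add (Set.mem_neg.mp hx) hs)
  have hYk : k ≤ Y.ncard := hY0k ▸ Set.ncard_le_ncard hY0sub hinf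
  have hk' : k ≤ (-A).ncard := by rw [hnegcard]; exact hAk
  have hcomplA : k ≤ (((-Y) + S)ᶜ).ncard :=
    le_trans hk' (Set.ncard_le_ncard h1 (Set.toFinite _))
  obtain ⟨Y1, hY1sub, hY1k⟩ := Set.exists_subset_card_eq hcomplA
  have hZmem : -Y ∈ SkAdd S k :=
    ⟨Set.toFinite _, by rw [hnegcard]; exact hYk, Y1, Set.toFinite _, hY1k, hY1sub⟩
  have e1 : (A + S).ncard + Y.ncard = Nat.card G :=
    Set.ncard_add_ncard_compl _ (Set.toFinite _) (Set.toFinite _)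
  have e2 : ((-Y) + S).ncard + A.ncard ≤ Nat.card G := by
    have h2 : (-Y) + S ⊆ (-A)ᶜ := Set.subset_compl_comm.mp h1
    have h3 := Set.ncard_le_ncard h2 (Set.toFinite _)
    have h4 : (-A).ncard + ((-A)ᶜ).ncard = Nat.card G :=
      Set.ncard_add_ncard_compl _ (Set.toFinite _) (Set.toFinite _)
    rw [hnegcard] at h4
    omega
  have e3 := cay_kappa_le hZmem
  have e5 : A.ncard ≤ (A + S).ncard :=
    Set.ncard_le_ncard (cay_subset_addS h0 A) (Set.toFinite _)
  have e7 : (-Y).ncard ≤ ((-Y) + S).ncard :=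
    Set.ncard_le_ncard (cay_subset_addS h0 (-Y)) (Set.toFinite _)
  have e8 := hnegcard Y
  have hfragZ : IsFragAdd S k (-Y) := ⟨hZmem, by omega⟩
  have hmin := hAmin _ hfragZ
  omega

lemma cay_atoms_eq (hfin : S.Finite) (h0 : (0 : G) ∈ S) {A B : Set G}
    (hA : IsAtomAdd S 1 A) (hB : IsAtomAdd S 1 B) (hne : (A ∩ B).Nonempty) : A = B := by
  have hfa := cay_faithful hfin h0 1
  have hAfin : A.Finite := hA.1.1.1
  have hBfin : B.Finite := hB.1.1.1
  have hIfin : (A ∩ B).Finite := hAfin.inter_of_left _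
  have hIS : (A ∩ B) + S ⊆ (A + S) ∩ (B + S) := by
    rintro x ⟨c, hc, s, hs, rfl⟩
    exact ⟨Set.add_mem_add hc.1 hs, Set.add_mem_add hc.2 hs⟩
  obtain ⟨-, -, Y0, hY0f, hY0k, hY0sub⟩ := hA.1.1
  have hImem : A ∩ B ∈ SkAdd S 1 := by
    refine ⟨hIfin, (Set.ncard_pos hIfin).mpr hne, Y0, hY0f, hY0k, ?_⟩
    intro y hy hmem
    exact hY0sub hy (Set.add_subset_add_right Set.inter_subset_left hmem)
  have hIle : ((A ∩ B) + S).ncard ≤ ((A + S) ∩ (B + S)).ncard :=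
    Set.ncard_le_ncard hIS ((hAfin.add hfin).inter_of_left _)
  have k1 := cay_kappa_le hImem
  have hAfrag := hA.1.2
  have hBfrag := hB.1.2
  have hasub : A.ncard ≤ (A + S).ncard :=
    Set.ncard_le_ncard (cay_subset_addS h0 A) (hAfin.add hfin)
  have hbsub : B.ncard ≤ (B + S).ncard :=
    Set.ncard_le_ncard (cay_subset_addS h0 B) (hBfin.add hfin)
  have hisub : (A ∩ B).ncard ≤ ((A ∩ B) + S).ncard :=
    Set.ncard_le_ncard (cay_subset_addS h0 _) (hIfin.add hfin)
  by_cases hz : ∃ z, z ∉ (A + S) ∪ (B + S)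
  · obtain ⟨z, hz⟩ := hz
    have hUmem : A ∪ B ∈ SkAdd S 1 := by
      refine ⟨hAfin.union hBfin, ?_, {z}, Set.finite_singleton z, Set.ncard_singleton z, ?_⟩
      · exact le_trans hA.1.1.2.1
          (Set.ncard_le_ncard Set.subset_union_left (hAfin.union hBfin))
      · intro y hy
        rw [Set.mem_singleton_iff] at hy
        subst hy
        simpa [Set.union_add] using hz
    have hUS : (A ∪ B) + S = (A + S) ∪ (B + S) := Set.union_add
    have hie : ((A + S) ∪ (B + S)).ncard + ((A + S) ∩ (B + S)).ncard
        = (A + S).ncard + (B + S).ncard :=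
      Set.ncard_union_add_ncard_inter _ _ (hAfin.add hfin) (hBfin.add hfin)
    have hiu : (A ∩ B).ncard + (A ∪ B).ncard = A.ncard + B.ncard :=
      Set.ncard_inter_add_ncard_union _ _ hAfin hBfin
    have k2 := cay_kappa_le hUmem
    have husub : (A ∪ B).ncard ≤ ((A ∪ B) + S).ncard :=
      Set.ncard_le_ncard (cay_subset_addS h0 _) ((hAfin.union hBfin).add hfin)
    rw [hUS] at k2 husub
    have hfragI : IsFragAdd S 1 (A ∩ B) := ⟨hImem, by omega⟩
    have h1 := hA.2 _ hfragI
    have h2 := hB.2 _ hfragI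
    have hAeq : A ∩ B = A := Set.eq_of_subset_of_ncard_le Set.inter_subset_left h1 hAfin
    have hBeq : A ∩ B = B := Set.eq_of_subset_of_ncard_le Set.inter_subset_right h2 hBfin
    rw [← hAeq, hBeq]
  · push_neg at hz
    have huniv : (Set.univ : Set G) = (A + S) ∪ (B + S) := by
      ext x
      simp [hz x]
    have hGfin : (Set.univ : Set G).Finite := by
      rw [huniv]
      exact (hAfin.add hfin).union (hBfin.add hfin)
    haveI : Finite G := Set.finite_univ_iff.mp hGfin
    have hfA : A.ncard ≤ ((A + S)ᶜ).ncard := by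
      rcases hfa A hA with h | h
      · exact absurd (Set.toFinite _) h
      · exact h
    have hfB : B.ncard ≤ ((B + S)ᶜ).ncard := by
      rcases hfa B hB with h | h
      · exact absurd (Set.toFinite _) h
      · exact h
    have nA : (A + S).ncard + ((A + S)ᶜ).ncard = Nat.card G :=
      Set.ncard_add_ncard_compl _ (Set.toFinite _) (Set.toFinite _)
    have nB : (B + S).ncard + ((B + S)ᶜ).ncard = Nat.card G :=
      Set.ncard_add_ncard_compl _ (Set.toFinite _) (Set.toFinite _)
    have hie : ((A + S) ∪ (B + S)).ncard + ((A + S) ∩ (B + S)).ncard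
        = (A + S).ncard + (B + S).ncard :=
      Set.ncard_union_add_ncard_inter _ _ (hAfin.add hfin) (hBfin.add hfin)
    have hun : ((A + S) ∪ (B + S)).ncard = Nat.card G := by
      rw [← huniv, Set.ncard_univ]
    have hi1 : 1 ≤ (A ∩ B).ncard := (Set.ncard_pos hIfin).mpr hne
    exfalso
    omega

end CayleyAux

theorem stmt7 {G : Type*} [AddCommGroup G] (S : Set G) (hfin : S.Finite)
    (h0 : (0 : G) ∈ S) (hgen : AddSubgroup.closure S = ⊤)
    (k : ℕ) (hk : 1 ≤ k) (hsep : SepAdd S k) :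
    FaithfulAdd S k ∧
    ∀ H : Set G, IsAtomAdd S 1 H → (0 : G) ∈ H → ∃ H' : AddSubgroup G, H = ↑H' := by
  refine ⟨cay_faithful hfin h0 k, ?_⟩
  intro H hH h0H
  have key : ∀ h ∈ H, {h} + H = H := fun h hh =>
    cay_atoms_eq hfin h0 (cay_translate_atom h hH) hH
      ⟨h, by simpa using Set.add_mem_add (Set.mem_singleton h) h0H, hh⟩
  refine ⟨⟨⟨⟨H, ?_⟩, h0H⟩, ?_⟩, rfl⟩
  · intro a b ha hb
    have := key a ha
    exact this ▸ Set.add_mem_add (Set.mem_singleton a) hb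
  · intro a ha
    have h0' : (0 : G) ∈ {a} + H := (key a ha).symm ▸ h0H
    obtain ⟨x, hx, y, hy, hxy⟩ := h0'
    rw [Set.mem_singleton_iff] at hx
    subst hx
    have : y = -x := eq_neg_of_add_eq_zero_right hxy
    rwa [← this]
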